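/- arXiv:2502.16108 — 9 statements merged into one kernel-verified Lean document; each statement's English description precedes it below -/
import Mathlib

section
/- Under the Newton iteration x_{i+1} = x_i − f(x_i)/f'(x_i), x_0 = 1, for f(x) = x² + bx + c with integer b ≥ 2, c < 0, 1 + b + c > 0, the error ε_i = x_i − α satisfies ε_{i+1} < ε_i²/b for all i ≥ 0. -/
theorem newton_error_lt (b c : ℤ) (hb : 2 ≤ b) (hc : c < 0)
    (h : 0 < 1 + b + c) (α : ℝ) (hα : α ∈ Set.Ioo (0 : ℝ) 1)
    (hroot : α ^ 2 + (b : ℝ) * α + (c : ℝ) = 0)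
    (x : ℕ → ℝ) (hx0 : x 0 = 1)
    (hxrec : ∀ i, x (i + 1) =
      x i - (x i ^ 2 + (b : ℝ) * x i + (c : ℝ)) / (2 * x i + (b : ℝ))) :
    ∀ i, x (i + 1) - α < (x i - α) ^ 2 / (b : ℝ) := by
  obtain ⟨hα0, hα1⟩ := hα
  have hb' : (2:ℝ) ≤ (b:ℝ) := by exact_mod_cast hb
  have hc' : (c:ℝ) = -(α ^ 2 + (b:ℝ) * α) := by linarith
  have key : ∀ i, α < x i → x (i + 1) - α = (x i - α) ^ 2 / (2 * x i + (b:ℝ)) := by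
    intro i hi
    have hden : (0:ℝ) < 2 * x i + (b:ℝ) := by nlinarith
    rw [hxrec, hc']
    rw [eq_div_iff hden.ne', sub_mul, sub_mul, div_mul_cancel₀ _ hden.ne']
    ring
  have pos : ∀ i, α < x i := by
    intro i
    induction i with
    | zero => rw [hx0]; exact hα1
    | succ n ih =>
      have hden : (0:ℝ) < 2 * x n + (b:ℝ) := by nlinarith
      have hk := key n ih
      have hp : 0 < (x n - α) ^ 2 / (2 * x n + (b:ℝ)) :=
        div_pos (pow_pos (sub_pos.mpr ih) 2) hden
      linarith
  intro i
  rw [key i (pos i)]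
  have hi := pos i
  exact div_lt_div_of_pos_left (pow_pos (sub_pos.mpr hi) 2) (by linarith) (by linarith)
end

section
/- For the Newton iteration x_{i+1} = x_i − f(x_i)/f'(x_i) with x_0 = 1 applied to f(x) = x² + bx + c with integer b ≥ 2, c < 0, 1 + b + c > 0, and α the root of f in (0,1), the error satisfies x_i − α < b^(−2^i + 1) for all i ≥ 0. -/
theorem newton_error_bound (b c : ℤ) (hb : 2 ≤ b) (hc : c < 0)
    (h : 0 < 1 + b + c) (α : ℝ) (hα : α ∈ Set.Ioo (0 : ℝ) 1)
    (hroot : α ^ 2 + (b : ℝ) * α + (c : ℝ) = 0)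
    (x : ℕ → ℝ) (hx0 : x 0 = 1)
    (hxrec : ∀ i, x (i + 1) =
      x i - (x i ^ 2 + (b : ℝ) * x i + (c : ℝ)) / (2 * x i + (b : ℝ))) :
    ∀ i : ℕ, x i - α < (b : ℝ) ^ (-(2 : ℤ) ^ i + 1) := by
  obtain ⟨hα0, hα1⟩ := hα
  have hb2 : (2 : ℝ) ≤ (b : ℝ) := by exact_mod_cast hb
  have hbpos : (0 : ℝ) < (b : ℝ) := by linarith
  suffices h : ∀ i, α ≤ x i ∧ x i - α < (b : ℝ) ^ (-(2 : ℤ) ^ i + 1) from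
    fun i => (h i).2
  intro i
  induction i with
  | zero =>
    constructor
    · rw [hx0]; linarith
    · simp [hx0]; linarith
  | succ i ih =>
    obtain ⟨hle, hlt⟩ := ih
    set k : ℤ := -(2 : ℤ) ^ i + 1 with hk
    have hB : 0 < (b : ℝ) ^ k := zpow_pos hbpos k
    have hd : 0 < 2 * x i + (b : ℝ) := by linarith
    have key : x (i + 1) - α = (x i - α) ^ 2 / (2 * x i + (b : ℝ)) := by
      rw [hxrec]
      rw [eq_div_iff hd.ne', sub_mul, sub_mul, div_mul_cancel₀ _ hd.ne']
      linear_combination -hroot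
    have he : 0 ≤ x i - α := by linarith
    have h1 : α ≤ x (i + 1) := by
      have := div_nonneg (sq_nonneg (x i - α)) hd.le
      linarith [key ▸ this]
    refine ⟨h1, ?_⟩
    have hsq : (x i - α) ^ 2 < ((b : ℝ) ^ k) ^ 2 := by nlinarith
    have hexp : -(2 : ℤ) ^ (i + 1) + 1 = 2 * k - 1 := by
      rw [hk]; ring
    have step1 : x (i + 1) - α ≤ (x i - α) ^ 2 / (b : ℝ) := by
      rw [key]
      exact div_le_div_of_nonneg_left (sq_nonneg _) hbpos (by linarith)
    have step2 : (x i - α) ^ 2 / (b : ℝ) < (b : ℝ) ^ (2 * k - 1) := by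
      rw [div_lt_iff₀ hbpos]
      have h2 : (b : ℝ) ^ (2 * k - 1) * (b : ℝ) = ((b : ℝ) ^ k) ^ 2 := by
        have h3 := zpow_add₀ (ne_of_gt hbpos) (2 * k - 1) 1
        rw [zpow_one] at h3
        rw [← h3, ← zpow_natCast ((b : ℝ) ^ k) 2, ← zpow_mul]
        rw [mul_comm]
        norm_num
      rw [h2]
      exact hsq
    rw [hexp]
    linarith
end

section
/- Let α ∈ (0,1) be irrational with binary digits (b_k), x ∈ (α,1) rational with binary digits (b̃_k) (expansion not ending in all 1s), integers N, n with 1 ≤ N < n and x − α < 2^(−n), and let (c̃_k) be the binary expansion (not ending in all 1s) of x − Σ_{k=1}^n b_k 2^(−k). Then the following are equivalent: (i) (b_1,…,b_N) ≠ (b̃_1,…,b̃_N); (ii) b_{N+1} = b_{N+2} = … = b_n = 1 and c̃_n = 1; (iii) b̃_{N+1} = b̃_{N+2} = … = b̃_n = 0 and c̃_n = 1. -/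
open Finset

noncomputable def Pd (d : ℕ → ℕ) (m : ℕ) : ℝ := ∑ k ∈ Finset.Icc 1 m, (d k : ℝ) * (2:ℝ) ^ (-(k:ℤ))
noncomputable def Vd (d : ℕ → ℕ) : ℝ := ∑' k : ℕ, (d (k+1) : ℝ) * (2:ℝ) ^ (-((k:ℤ)+1))

lemma two_zpow_pos' (z : ℤ) : (0:ℝ) < 2 ^ z := zpow_pos (by norm_num) z

lemma two_zpow_anti {a c : ℤ} (h : a ≤ c) : (2:ℝ)^(-c) ≤ 2^(-a) :=
  zpow_le_zpow_right₀ (by norm_num) (neg_le_neg h)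

lemma zhalf (k : ℕ) : (2:ℝ)^(-((k+1:ℕ):ℤ)) = 2^(-(k:ℤ)) / 2 := by
  push_cast
  rw [neg_add, zpow_add₀ (two_ne_zero)]
  norm_num
  ring

lemma geom_Icc (m n : ℕ) (h : m ≤ n) :
    ∑ k ∈ Finset.Icc (m+1) n, (2:ℝ)^(-(k:ℤ)) = 2^(-(m:ℤ)) - 2^(-(n:ℤ)) := by
  induction n, h using Nat.le_induction with
  | base => simp
  | succ n hmn ih =>
    rw [Finset.sum_Icc_succ_top (by omega), ih, zhalf]
    ring

lemma Pd_succ (d : ℕ → ℕ) (m : ℕ) :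
    Pd d (m+1) = Pd d m + (d (m+1) : ℝ) * 2^(-((m+1:ℕ):ℤ)) := by
  rw [Pd, Finset.sum_Icc_succ_top (by omega)]; rfl

lemma Pd_nonneg (d : ℕ → ℕ) (m : ℕ) : 0 ≤ Pd d m :=
  Finset.sum_nonneg fun k _ => by positivity

lemma Pd_split (d : ℕ → ℕ) {m n : ℕ} (h : m ≤ n) :
    Pd d n = Pd d m + ∑ k ∈ Finset.Icc (m+1) n, (d k:ℝ) * 2^(-(k:ℤ)) := by
  rw [Pd, Pd, show Finset.Icc 1 m = Finset.Ioc 0 m from rfl,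
    show Finset.Icc 1 n = Finset.Ioc 0 n from rfl, Finset.Icc_add_one_left_eq_Ioc,
    ← Finset.sum_Ioc_consecutive _ (Nat.zero_le m) h]

lemma Pd_mono_gap (d : ℕ → ℕ) (hd : ∀ k, d k ≤ 1) {m n : ℕ} (h : m ≤ n) :
    Pd d m ≤ Pd d n ∧ Pd d n ≤ Pd d m + (2^(-(m:ℤ)) - 2^(-(n:ℤ))) := by
  rw [Pd_split d h]
  constructor
  · have : (0:ℝ) ≤ ∑ k ∈ Finset.Icc (m+1) n, (d k:ℝ) * 2^(-(k:ℤ)) :=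
      Finset.sum_nonneg fun k _ => by positivity
    linarith
  · rw [← geom_Icc m n h]
    have : ∑ k ∈ Finset.Icc (m+1) n, (d k:ℝ) * 2^(-(k:ℤ))
        ≤ ∑ k ∈ Finset.Icc (m+1) n, (2:ℝ)^(-(k:ℤ)) := by
      apply Finset.sum_le_sum
      intro k _
      have : (d k : ℝ) ≤ 1 := by exact_mod_cast hd k
      nlinarith [two_zpow_pos' (-(k:ℤ))]
    linarith

lemma Pd_int (d : ℕ → ℕ) (m : ℕ) : ∃ z : ℤ, Pd d m = (z:ℝ) * 2^(-(m:ℤ)) := by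
  induction m with
  | zero => exact ⟨0, by simp [Pd]⟩
  | succ m ih =>
    obtain ⟨z, hz⟩ := ih
    refine ⟨2 * z + d (m+1), ?_⟩
    rw [Pd_succ, hz, zhalf]
    push_cast
    ring

lemma dig_le (d : ℕ → ℕ) (hd : ∀ k, d k ≤ 1) (k : ℕ) :
    (d (k+1) : ℝ) * (2:ℝ)^(-((k:ℤ)+1)) ≤ (1/2:ℝ) * (1/2:ℝ)^k := by
  have h1 : (d (k+1):ℝ) ≤ 1 := by exact_mod_cast hd (k+1)
  have h2 : (2:ℝ)^(-((k:ℤ)+1)) = (1/2:ℝ) * (1/2:ℝ)^k := by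
    rw [neg_add, zpow_add₀ (two_ne_zero)]
    rw [one_div, inv_pow, ← zpow_natCast (2:ℝ) k, ← zpow_neg]
    norm_num
    ring
  rw [h2]
  nlinarith [two_zpow_pos' (-(k:ℤ)+ -1), pow_pos (by norm_num : (0:ℝ)<1/2) k]

lemma summable_dig (d : ℕ → ℕ) (hd : ∀ k, d k ≤ 1) :
    Summable (fun k : ℕ => (d (k+1) : ℝ) * (2:ℝ) ^ (-((k:ℤ)+1))) := by
  apply Summable.of_nonneg_of_le (fun k => by positivity) (dig_le d hd)
  exact (summable_geometric_of_lt_one (by norm_num) (by norm_num)).mul_left _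

lemma geom_tail (m : ℕ) :
    ∑' k : ℕ, ((2:ℝ)^(-(m:ℤ)) * ((1/2:ℝ) * (1/2:ℝ)^k)) = (2:ℝ)^(-(m:ℤ)) := by
  rw [tsum_mul_left, tsum_mul_left, tsum_geometric_of_lt_one (by norm_num) (by norm_num)]
  norm_num

lemma shift_le (d : ℕ → ℕ) (hd : ∀ k, d k ≤ 1) (m k : ℕ) :
    (d (k+m+1) : ℝ) * (2:ℝ)^(-((k+m:ℕ):ℤ)+ -1) ≤ (2:ℝ)^(-(m:ℤ)) * ((1/2:ℝ) * (1/2:ℝ)^k) := by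
  have em : (2:ℝ)^(-(m:ℤ)) = (1/2:ℝ)^m := by
    rw [one_div, inv_pow, ← zpow_natCast (2:ℝ) m, ← zpow_neg]
  have e1 : (2:ℝ)^(-(m:ℤ)) * ((1/2:ℝ) * (1/2:ℝ)^k) = (1/2:ℝ) * (1/2:ℝ)^(k+m) := by
    rw [em, pow_add]
    ring
  rw [e1]
  calc (d (k+m+1) : ℝ) * (2:ℝ)^(-((k+m:ℕ):ℤ)+ -1)
      = (d ((k+m)+1) : ℝ) * (2:ℝ)^(-(((k+m):ℕ):ℤ)+(-1)) := by norm_num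
    _ ≤ _ := by
        have h := dig_le d hd (k+m)
        convert h using 2
        push_cast
        ring

lemma Vd_split (d : ℕ → ℕ) (hd : ∀ k, d k ≤ 1) (m : ℕ) :
    Vd d = Pd d m + ∑' k : ℕ, (d (k+m+1) : ℝ) * (2:ℝ)^(-(((k+m:ℕ)):ℤ)+ -1) := by
  have hs := summable_dig d hd
  have := hs.sum_add_tsum_nat_add m
  rw [Vd, ← this]
  congr 1
  · rw [Pd, show Finset.Icc 1 m = Finset.Ico 1 (m+1) by rw [Finset.Ico_add_one_right_eq_Icc],
      Finset.sum_Ico_eq_sum_range]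
    apply Finset.sum_congr (by norm_num)
    intro i _
    push_cast
    ring_nf
  · apply tsum_congr
    intro k
    push_cast
    ring_nf

lemma summable_shift (d : ℕ → ℕ) (hd : ∀ k, d k ≤ 1) (m : ℕ) :
    Summable (fun k : ℕ => (d (k+m+1) : ℝ) * (2:ℝ)^(-(((k+m:ℕ)):ℤ)+ -1)) := by
  apply Summable.of_nonneg_of_le (fun k => by positivity) (shift_le d hd m)
  exact ((summable_geometric_of_lt_one (by norm_num) (by norm_num)).mul_left _).mul_left _

lemma Pd_le_Vd (d : ℕ → ℕ) (hd : ∀ k, d k ≤ 1) (m : ℕ) : Pd d m ≤ Vd d := by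
  rw [Vd_split d hd m]
  have : (0:ℝ) ≤ ∑' k : ℕ, (d (k+m+1) : ℝ) * (2:ℝ)^(-(((k+m:ℕ)):ℤ)+ -1) :=
    tsum_nonneg fun k => by positivity
  linarith

lemma Vd_le_Pd (d : ℕ → ℕ) (hd : ∀ k, d k ≤ 1) (m : ℕ) : Vd d ≤ Pd d m + 2^(-(m:ℤ)) := by
  rw [Vd_split d hd m]
  have h := Summable.tsum_le_tsum (shift_le d hd m) (summable_shift d hd m)
    (((summable_geometric_of_lt_one (by norm_num) (by norm_num)).mul_left _).mul_left _)
  rw [geom_tail] at h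
  linarith

lemma Vd_lt_Pd (d : ℕ → ℕ) (hd : ∀ k, d k ≤ 1) (m : ℕ)
    (h0 : ∃ K, m < K ∧ d K = 0) : Vd d < Pd d m + 2^(-(m:ℤ)) := by
  obtain ⟨K, hK1, hK2⟩ := h0
  rw [Vd_split d hd m]
  have h := Summable.tsum_lt_tsum (i := K - m - 1) (shift_le d hd m) ?_ (summable_shift d hd m)
    (((summable_geometric_of_lt_one (by norm_num) (by norm_num)).mul_left _).mul_left _)
  · rw [geom_tail] at h
    linarith
  · have he : K - m - 1 + m + 1 = K := by omega
    rw [he, hK2]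
    simp only [Nat.cast_zero, zero_mul]
    positivity

lemma int_mul_unique {x : ℝ} {m : ℤ} {z w : ℤ}
    (h1 : (z:ℝ) * 2^m ≤ x) (h2 : x < z * 2^m + 2^m)
    (h3 : (w:ℝ) * 2^m ≤ x) (h4 : x < w * 2^m + 2^m) : z = w := by
  have hp : (0:ℝ) < 2^m := two_zpow_pos' m
  have hzw : (z:ℝ) < w + 1 := by nlinarith
  have hwz : (w:ℝ) < z + 1 := by nlinarith
  have h5 : z < w + 1 := by exact_mod_cast hzw
  have h6 : w < z + 1 := by exact_mod_cast hwz
  omega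

lemma int_mul_coarsen {s : ℝ} {j m : ℕ} (h : j ≤ m) (z : ℤ)
    (hs : s = (z:ℝ) * 2^(-(j:ℤ))) : ∃ w : ℤ, s = (w:ℝ) * 2^(-(m:ℤ)) := by
  refine ⟨z * 2^(m-j), ?_⟩
  rw [hs]
  push_cast
  rw [mul_assoc, ← zpow_natCast (2:ℝ) (m-j), ← zpow_add₀ (two_ne_zero : (2:ℝ) ≠ 0)]
  congr 2
  omega

lemma grid_unique {x s t : ℝ} {m : ℕ}
    (hsint : ∃ z : ℤ, s = (z:ℝ) * 2^(-(m:ℤ))) (htint : ∃ z : ℤ, t = (z:ℝ) * 2^(-(m:ℤ)))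
    (h1 : s ≤ x) (h2 : x < s + 2^(-(m:ℤ))) (h3 : t ≤ x) (h4 : x < t + 2^(-(m:ℤ))) : s = t := by
  obtain ⟨z, rfl⟩ := hsint
  obtain ⟨w, rfl⟩ := htint
  rw [int_mul_unique h1 h2 h3 h4]

lemma irr_ne_grid {α : ℝ} (hirr : Irrational α) {s : ℝ} {m : ℕ}
    (hs : ∃ z : ℤ, s = (z:ℝ) * 2^(-(m:ℤ))) : α ≠ s := by
  obtain ⟨z, rfl⟩ := hs
  intro h
  apply hirr
  refine ⟨(z:ℚ) * (2:ℚ)^(-(m:ℤ)), ?_⟩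
  rw [h]
  push_cast
  ring

lemma digit_val {d : ℕ → ℕ} {k : ℕ} (hk : 1 ≤ k) {c : ℕ}
    (h : Pd d k = Pd d (k-1) + (c:ℝ) * 2^(-(k:ℤ))) : d k = c := by
  obtain ⟨m, rfl⟩ : ∃ m, k = m + 1 := ⟨k-1, by omega⟩
  rw [Pd_succ, Nat.add_sub_cancel] at h
  have hp : (0:ℝ) < 2^(-((m+1:ℕ):ℤ)) := two_zpow_pos' _
  have : (d (m+1) : ℝ) = (c : ℝ) := by
    have := mul_right_cancel₀ (ne_of_gt hp) (by linarith : (d (m+1):ℝ) * 2^(-((m+1:ℕ):ℤ)) = (c:ℝ) * 2^(-((m+1:ℕ):ℤ)))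
    exact this
  exact_mod_cast this
theorem binary_expansion_match_conditions
    (α : ℝ) (hα : α ∈ Set.Ioo (0 : ℝ) 1) (hirr : Irrational α)
    (b : ℕ → ℕ) (hb : ∀ k, b k ≤ 1)
    (hbsum : α = ∑' k : ℕ, (b (k + 1) : ℝ) * (2 : ℝ) ^ (-((k : ℤ) + 1)))
    (x : ℚ) (hxl : α < (x : ℝ)) (hxu : (x : ℝ) < 1)
    (bt : ℕ → ℕ) (hbt : ∀ k, bt k ≤ 1)
    (hbtsum : (x : ℝ) = ∑' k : ℕ, (bt (k + 1) : ℝ) * (2 : ℝ) ^ (-((k : ℤ) + 1)))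
    (hbt1 : ¬ ∃ K, ∀ k ≥ K, bt k = 1)
    (n N : ℕ) (hN1 : 1 ≤ N) (hNn : N < n)
    (hclose : (x : ℝ) - α < (2 : ℝ) ^ (-(n : ℤ)))
    (ct : ℕ → ℕ) (hct : ∀ k, ct k ≤ 1)
    (hctsum : (x : ℝ) - ∑ k ∈ Finset.Icc 1 n, (b k : ℝ) * (2 : ℝ) ^ (-(k : ℤ))
      = ∑' k : ℕ, (ct (k + 1) : ℝ) * (2 : ℝ) ^ (-((k : ℤ) + 1)))
    (hct1 : ¬ ∃ K, ∀ k ≥ K, ct k = 1) :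
    ((∃ k, 1 ≤ k ∧ k ≤ N ∧ b k ≠ bt k) ↔
      ((∀ k, N + 1 ≤ k → k ≤ n → b k = 1) ∧ ct n = 1)) ∧
    ((∃ k, 1 ≤ k ∧ k ≤ N ∧ b k ≠ bt k) ↔
      ((∀ k, N + 1 ≤ k → k ≤ n → bt k = 0) ∧ ct n = 1)) := by
  have hαV : α = Vd b := hbsum
  have hxV : (x:ℝ) = Vd bt := hbtsum
  have hyV : (x:ℝ) - Pd b n = Vd ct := hctsum
  push_neg at hbt1 hct1
  have hbtz : ∀ m : ℕ, ∃ K, m < K ∧ bt K = 0 := by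
    intro m
    obtain ⟨k, hk1, hk2⟩ := hbt1 (m+1)
    exact ⟨k, by omega, by have := hbt k; omega⟩
  have hctz : ∀ m : ℕ, ∃ K, m < K ∧ ct K = 0 := by
    intro m
    obtain ⟨k, hk1, hk2⟩ := hct1 (m+1)
    exact ⟨k, by omega, by have := hct k; omega⟩
  have hPlt : ∀ m : ℕ, Pd b m < α := by
    intro m
    have hle : Pd b m ≤ α := by rw [hαV]; exact Pd_le_Vd b hb m
    exact hle.lt_of_ne (irr_ne_grid hirr (Pd_int b m)).symm
  have hαlt : ∀ m : ℕ, α < Pd b m + 2^(-(m:ℤ)) := by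
    intro m
    have hle : α ≤ Pd b m + 2^(-(m:ℤ)) := by rw [hαV]; exact Vd_le_Pd b hb m
    refine hle.lt_of_ne (irr_ne_grid (m := m) hirr ?_)
    obtain ⟨z, hz⟩ := Pd_int b m
    exact ⟨z+1, by rw [hz]; push_cast; ring⟩
  have hxPle : ∀ m : ℕ, Pd bt m ≤ (x:ℝ) := by
    intro m; rw [hxV]; exact Pd_le_Vd bt hbt m
  have hxPlt : ∀ m : ℕ, (x:ℝ) < Pd bt m + 2^(-(m:ℤ)) := by
    intro m; rw [hxV]; exact Vd_lt_Pd bt hbt m (hbtz m)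
  have hyPle : ∀ m : ℕ, Pd ct m ≤ (x:ℝ) - Pd b n := by
    intro m; rw [hyV]; exact Pd_le_Vd ct hct m
  have hyPlt : ∀ m : ℕ, (x:ℝ) - Pd b n < Pd ct m + 2^(-(m:ℤ)) := by
    intro m; rw [hyV]; exact Vd_lt_Pd ct hct m (hctz m)
  have hy0 : 0 < (x:ℝ) - Pd b n := by have := hPlt n; linarith
  have hy2 : (x:ℝ) - Pd b n < 2^(-(n:ℤ)) + 2^(-(n:ℤ)) := by
    have := hαlt n; linarith
  have hct0 : ∀ k, 1 ≤ k → k ≤ n-1 → ct k = 0 := by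
    intro k hk1 hk2
    by_contra hne
    have hck : ct k = 1 := by have := hct k; omega
    have h1 : (2:ℝ)^(-(k:ℤ)) ≤ Pd ct k := by
      have hnn := Pd_nonneg ct (k-1)
      have hsp : Pd ct k = Pd ct (k-1) + (ct k:ℝ)*2^(-(k:ℤ)) := by
        obtain ⟨m, rfl⟩ : ∃ m, k = m+1 := ⟨k-1, by omega⟩
        rw [Pd_succ, Nat.add_sub_cancel]
      rw [hsp, hck]
      push_cast
      linarith
    have h2 : (2:ℝ)^(-(n:ℤ)) + 2^(-(n:ℤ)) ≤ 2^(-(k:ℤ)) := by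
      have hle : (2:ℝ)^(-(n:ℤ)) ≤ 2^(-((k+1:ℕ):ℤ)) := two_zpow_anti (by omega)
      have := zhalf k
      linarith
    linarith [hyPle k]
  have hPctn : Pd ct n = (ct n : ℝ) * 2^(-(n:ℤ)) := by
    have hz : Pd ct (n-1) = 0 := by
      rw [Pd]
      apply Finset.sum_eq_zero
      intro k hk
      rw [Finset.mem_Icc] at hk
      rw [hct0 k hk.1 hk.2]
      simp
    have hsp : Pd ct n = Pd ct (n-1) + (ct n:ℝ)*2^(-(n:ℤ)) := by
      obtain ⟨m, hm⟩ : ∃ m, n = m+1 := ⟨n-1, by omega⟩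
      rw [hm, Pd_succ, Nat.add_sub_cancel]
    rw [hsp, hz, zero_add]
  by_cases hc : ct n = 1
  · -- carry case
    have hyge : (2:ℝ)^(-(n:ℤ)) ≤ (x:ℝ) - Pd b n := by
      have := hyPle n
      rw [hPctn, hc] at this
      push_cast at this
      linarith
    obtain ⟨j, hj1, hjn, hbj, hmax⟩ :
        ∃ j, 1 ≤ j ∧ j ≤ n ∧ b j = 0 ∧ ∀ k, j < k → k ≤ n → b k = 1 := by
      have hex : ∃ k, 1 ≤ k ∧ k ≤ n ∧ b k = 0 := by
        by_contra hall
        push_neg at hall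
        have hones : ∀ k ∈ Finset.Icc 1 n, (b k:ℝ) * 2^(-(k:ℤ)) = 2^(-(k:ℤ)) := by
          intro k hk
          rw [Finset.mem_Icc] at hk
          have hb1 : b k = 1 := by have := hb k; have := hall k hk.1 hk.2; omega
          rw [hb1]; simp
        have hA : Pd b n = 1 - 2^(-(n:ℤ)) := by
          rw [Pd, Finset.sum_congr rfl hones]
          have := geom_Icc 0 n (by omega)
          simpa using this
        rw [hA] at hyge
        linarith
      obtain ⟨k0, hk01, hk0n, hk00⟩ := hex
      have hle : k0 ≤ Nat.findGreatest (fun k => b k = 0) n :=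
        Nat.le_findGreatest hk0n hk00
      have hspec : b (Nat.findGreatest (fun k => b k = 0) n) = 0 :=
        Nat.findGreatest_of_ne_zero (P := fun k => b k = 0) rfl (by omega)
      refine ⟨_, by omega, Nat.findGreatest_le n, hspec, ?_⟩
      intro k h1 h2
      have hnP : ¬ (b k = 0) :=
        Nat.findGreatest_is_greatest (P := fun k => b k = 0) h1 h2
      have := hb k
      omega
    obtain ⟨j', rfl⟩ : ∃ j', j = j' + 1 := ⟨j-1, by omega⟩
    have hA' : Pd b n + 2^(-(n:ℤ)) = Pd b j' + 2^(-((j'+1:ℕ):ℤ)) := by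
      have hsp := Pd_split b hjn
      have hones : ∑ k ∈ Finset.Icc (j'+1+1) n, (b k:ℝ)*2^(-(k:ℤ))
          = 2^(-((j'+1:ℕ):ℤ)) - 2^(-(n:ℤ)) := by
        rw [← geom_Icc (j'+1) n hjn]
        apply Finset.sum_congr rfl
        intro k hk
        rw [Finset.mem_Icc] at hk
        rw [hmax k (by omega) hk.2]
        simp
      have hPj : Pd b (j'+1) = Pd b j' := by
        rw [Pd_succ, hbj]
        simp
      rw [hsp, hones, hPj]
      ring
    have g2 : (2:ℝ)^(-(n:ℤ)) ≤ 2^(-((j'+1:ℕ):ℤ)) := two_zpow_anti (by omega)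
    have g3 := zhalf j'
    have hbtlow : ∀ m, m ≤ j' → Pd bt m = Pd b m := by
      intro m hm
      apply grid_unique (Pd_int bt m) (Pd_int b m) (hxPle m) (hxPlt m)
      · have := hPlt m; linarith
      · have := (Pd_mono_gap b hb hm).2
        linarith
    have hbteqlow : ∀ k, 1 ≤ k → k ≤ j' → bt k = b k := by
      intro k h1 h2
      apply digit_val h1
      rw [hbtlow k h2, hbtlow (k-1) (by omega)]
      obtain ⟨m, rfl⟩ : ∃ m, k = m+1 := ⟨k-1, by omega⟩
      rw [Pd_succ, Nat.add_sub_cancel]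
    have hAgrid : ∃ z:ℤ, Pd b j' + 2^(-((j'+1:ℕ):ℤ)) = (z:ℝ) * 2^(-((j'+1:ℕ):ℤ)) := by
      obtain ⟨z, hz⟩ := Pd_int b j'
      refine ⟨2*z+1, ?_⟩
      rw [hz, zhalf j']
      push_cast
      ring
    have hbthigh : ∀ m, j'+1 ≤ m → m ≤ n → Pd bt m = Pd b j' + 2^(-((j'+1:ℕ):ℤ)) := by
      intro m h1 h2
      obtain ⟨z, hz⟩ := hAgrid
      apply grid_unique (Pd_int bt m) (int_mul_coarsen h1 z hz) (hxPle m) (hxPlt m)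
      · linarith
      · have : (2:ℝ)^(-(n:ℤ)) ≤ 2^(-(m:ℤ)) := two_zpow_anti (by omega)
        linarith
    have hbtj : bt (j'+1) = 1 := by
      apply digit_val (by omega)
      rw [hbthigh (j'+1) le_rfl (by omega), Nat.add_sub_cancel, hbtlow j' le_rfl]
      push_cast
      ring
    have hbt0 : ∀ k, j'+1 < k → k ≤ n → bt k = 0 := by
      intro k h1 h2
      apply digit_val (by omega)
      rw [hbthigh k (by omega) h2, hbthigh (k-1) (by omega) (by omega)]
      push_cast
      ring
    have hiff1 : (∃ k, 1 ≤ k ∧ k ≤ N ∧ b k ≠ bt k) ↔ j'+1 ≤ N := by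
      constructor
      · rintro ⟨k, h1, h2, hne⟩
        by_contra hN
        push_neg at hN
        exact hne (hbteqlow k h1 (by omega)).symm
      · intro h
        exact ⟨j'+1, by omega, h, by rw [hbj, hbtj]; omega⟩
    have hiff2 : (∀ k, N + 1 ≤ k → k ≤ n → b k = 1) ↔ j'+1 ≤ N := by
      constructor
      · intro h
        by_contra hN
        push_neg at hN
        have := h (j'+1) (by omega) (by omega)
        omega
      · intro h k h1 h2
        exact hmax k (by omega) h2
    have hiff3 : (∀ k, N + 1 ≤ k → k ≤ n → bt k = 0) ↔ j'+1 ≤ N := by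
      constructor
      · intro h
        by_contra hN
        push_neg at hN
        have := h (j'+1) (by omega) (by omega)
        omega
      · intro h k h1 h2
        exact hbt0 k (by omega) h2
    constructor
    · rw [hiff1]
      simp only [hc, and_true]
      exact hiff2.symm
    · rw [hiff1]
      simp only [hc, and_true]
      exact hiff3.symm
  · -- no-carry case
    have hc0 : ct n = 0 := by have := hct n; omega
    have hylt : (x:ℝ) - Pd b n < 2^(-(n:ℤ)) := by
      have := hyPlt n
      rw [hPctn, hc0] at this
      push_cast at this
      linarith
    have hPeq : ∀ m, m ≤ n → Pd bt m = Pd b m := by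
      intro m hm
      apply grid_unique (Pd_int bt m) (Pd_int b m) (hxPle m) (hxPlt m)
      · have := hPlt m; linarith
      · have := (Pd_mono_gap b hb hm).2
        linarith
    have hbteq : ∀ k, 1 ≤ k → k ≤ n → bt k = b k := by
      intro k h1 h2
      apply digit_val h1
      rw [hPeq k h2, hPeq (k-1) (by omega)]
      obtain ⟨m, rfl⟩ : ∃ m, k = m+1 := ⟨k-1, by omega⟩
      rw [Pd_succ, Nat.add_sub_cancel]
    constructor <;> constructor
    · rintro ⟨k, h1, h2, hne⟩
      exact absurd (hbteq k h1 (by omega)).symm hne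
    · rintro ⟨-, h⟩
      omega
    · rintro ⟨k, h1, h2, hne⟩
      exact absurd (hbteq k h1 (by omega)).symm hne
    · rintro ⟨-, h⟩
      omega
end

section
/- Let α ∈ (0,1) be irrational with binary digits (b_k) and x ∈ (α,1) rational with binary digits (b̃_k) taken from the expansion not ending in all 1s. Let n ≥ 2 be an integer with x − α < 2^(−n). If there exists k with 2 ≤ k ≤ n and b̃_k = 1, then b_j = b̃_j for all 1 ≤ j ≤ k − 1. -/
lemma geom_half_tail (c : ℕ) : ∑' i : ℕ, ((1/2:ℝ))^(i+c) = (1/2)^c * 2 := by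
  have h : ∀ i : ℕ, ((1/2:ℝ))^(i+c) = (1/2)^c * (1/2)^i := by
    intro i; rw [pow_add]; ring
  rw [tsum_congr h, tsum_mul_left, tsum_geometric_of_lt_one (by norm_num) (by norm_num)]
  norm_num

lemma key_lemma (c : ℕ → ℝ) (hsum : Summable c) (j m : ℕ) (hjm : j < m)
    (hlow : ∀ i, -((1/2:ℝ))^(i+1) ≤ c i)
    (hzero : ∀ i < j, c i = 0)
    (hcj : ((1/2:ℝ))^(j+1) ≤ c j)
    (hcm : 0 ≤ c m) :
    ((1/2:ℝ))^(m+1) ≤ ∑' i, c i := by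
  have hsplit := Summable.sum_add_tsum_nat_add (f := c) (j+1) hsum
  have hrange : ∑ i ∈ Finset.range (j+1), c i = c j := by
    rw [Finset.sum_range_succ, Finset.sum_eq_zero (fun i hi => hzero i (Finset.mem_range.mp hi))]
    ring
  set g : ℕ → ℝ := fun i => -((1/2:ℝ))^(i+j+2) with hg
  have hgsum : Summable g := by
    have : Summable (fun i : ℕ => ((1/2:ℝ))^(i+(j+2))) := by
      apply Summable.congr (f := fun i : ℕ => ((1/2:ℝ))^(j+2) * (1/2)^i)
      · exact (summable_geometric_of_lt_one (by norm_num) (by norm_num)).mul_left _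
      · intro i; rw [pow_add]; ring
    exact (this.neg).congr (fun i => by simp [hg, add_assoc])
  set L : ℕ → ℝ := fun i => if i = m - (j+1) then 0 else g i with hL
  have hLsum : Summable L := by
    have := hgsum.update (m - (j+1)) 0
    exact this.congr (fun i => by simp [hL, Function.update_apply])
  have hLsumval : ∑' i, L i = (1/2:ℝ)^(m+1) - (1/2)^(j+1) := by
    have h1 := Summable.tsum_eq_add_tsum_ite hgsum (m - (j+1))
    have hgv : ∑' i, g i = -((1/2:ℝ))^(j+1) := by
      have : ∑' i, g i = -∑' i : ℕ, ((1/2:ℝ))^(i+(j+2)) := by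
        rw [← tsum_neg]; exact tsum_congr (fun i => by simp [hg, add_assoc])
      rw [this, geom_half_tail]; ring
    have hgm : g (m - (j+1)) = -((1/2:ℝ))^(m+1) := by
      have : m - (j+1) + j + 2 = m + 1 := by omega
      simp [hg, this]
    have hLL : ∑' i, L i = ∑' n, ite (n = m - (j+1)) (0:ℝ) (g n) := rfl
    rw [hgv, hgm] at h1
    rw [hLL]; linarith [h1]
  have htail : ∑' i, L i ≤ ∑' i, c (i + (j+1)) := by
    apply Summable.tsum_le_tsum _ hLsum ((summable_nat_add_iff (j+1)).mpr hsum)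
    intro i
    by_cases hi : i = m - (j+1)
    · subst hi
      simp only [hL, if_pos rfl]
      have hm' : m - (j+1) + (j+1) = m := by omega
      rw [hm']; exact hcm
    · simp only [hL, if_neg hi, hg]
      have := hlow (i + (j+1))
      calc -((1/2:ℝ))^(i+j+2) = -((1/2:ℝ))^(i+(j+1)+1) := by ring_nf
        _ ≤ c (i + (j+1)) := hlow _
  have h2 : (1/2:ℝ)^(m+1) - (1/2)^(j+1) ≤ ∑' i, c (i + (j+1)) := hLsumval ▸ htail
  rw [← hsplit, hrange]
  linarith [hcj, h2]

lemma zpow_conv (i : ℕ) : (2:ℝ) ^ (-((i:ℤ)+1)) = ((1/2:ℝ))^(i+1) := by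
  rw [one_div, inv_pow, ← zpow_natCast (2:ℝ) (i+1), ← zpow_neg]
  norm_num

lemma digit_summable (d : ℕ → ℕ) (hd : ∀ k, d k ≤ 1) :
    Summable (fun i : ℕ => (d (i+1) : ℝ) * (1/2:ℝ)^(i+1)) := by
  have hg : Summable (fun i : ℕ => ((1/2:ℝ))^(i+1)) := by
    apply Summable.congr (f := fun i : ℕ => ((1/2:ℝ)) * (1/2)^i)
    · exact (summable_geometric_of_lt_one (by norm_num) (by norm_num)).mul_left _
    · intro i; rw [pow_succ]; ring
  refine Summable.of_nonneg_of_le (fun i => by positivity) (fun i => ?_) hg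
  have : (d (i+1) : ℝ) ≤ 1 := by exact_mod_cast hd (i+1)
  nlinarith [pow_pos (by norm_num : (0:ℝ) < 1/2) (i+1)]

theorem binary_expansion_match_corollary
    (α : ℝ) (hα : α ∈ Set.Ioo (0 : ℝ) 1) (hirr : Irrational α)
    (b : ℕ → ℕ) (hb : ∀ k, b k ≤ 1)
    (hbsum : α = ∑' k : ℕ, (b (k + 1) : ℝ) * (2 : ℝ) ^ (-((k : ℤ) + 1)))
    (x : ℚ) (hxl : α < (x : ℝ)) (hxu : (x : ℝ) < 1)
    (bt : ℕ → ℕ) (hbt : ∀ k, bt k ≤ 1)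
    (hbtsum : (x : ℝ) = ∑' k : ℕ, (bt (k + 1) : ℝ) * (2 : ℝ) ^ (-((k : ℤ) + 1)))
    (hbt1 : ¬ ∃ K, ∀ k ≥ K, bt k = 1)
    (n : ℕ) (hn : 2 ≤ n)
    (hclose : (x : ℝ) - α < (2 : ℝ) ^ (-(n : ℤ)))
    (k : ℕ) (hk2 : 2 ≤ k) (hkn : k ≤ n) (hk1 : bt k = 1) :
    ∀ j, 1 ≤ j → j < k → b j = bt j := by
  set fb : ℕ → ℝ := fun i => (b (i+1) : ℝ) * (1/2:ℝ)^(i+1) with hfb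
  set fbt : ℕ → ℝ := fun i => (bt (i+1) : ℝ) * (1/2:ℝ)^(i+1) with hfbt
  have hfbsum : Summable fb := digit_summable b hb
  have hfbtsum : Summable fbt := digit_summable bt hbt
  have hα' : α = ∑' i, fb i := by
    rw [hbsum]; exact tsum_congr (fun i => by rw [zpow_conv])
  have hx' : (x:ℝ) = ∑' i, fbt i := by
    rw [hbtsum]; exact tsum_congr (fun i => by rw [zpow_conv])
  have hsub1 : (x:ℝ) - α = ∑' i, (fbt i - fb i) := by
    rw [hα', hx', ← Summable.tsum_sub hfbtsum hfbsum]
  have hsub2 : α - (x:ℝ) = ∑' i, (fb i - fbt i) := by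
    rw [hα', hx', ← Summable.tsum_sub hfbsum hfbtsum]
  intro j
  induction j using Nat.strong_induction_on with
  | _ j IH =>
  intro hj1 hjk
  by_contra hne
  have hzero : ∀ i < j - 1, fbt i - fb i = 0 := by
    intro i hi
    have : b (i+1) = bt (i+1) := IH (i+1) (by omega) (by omega) (by omega)
    simp [hfb, hfbt, this]
  have hbj := hb j
  have hbtj := hbt j
  have hdig : ∀ (i : ℕ), 1 ≤ i → (((b i : ℝ)) * (1/2:ℝ)^i) ≤ (1/2:ℝ)^i ∧
      0 ≤ ((bt i : ℝ)) * (1/2:ℝ)^i := by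
    intro i _
    constructor
    · have : (b i : ℝ) ≤ 1 := by exact_mod_cast hb i
      nlinarith [pow_pos (by norm_num : (0:ℝ) < 1/2) i]
    · positivity
  rcases Nat.lt_or_ge (bt j) 1 with hc | hc
  · -- bt j = 0, b j = 1
    have hbtj0 : bt j = 0 := by omega
    have hbj1 : b j = 1 := by omega
    push_neg at hbt1
    obtain ⟨m, hmj, hmne⟩ := hbt1 (j+1)
    have hbtm : bt m = 0 := by have := hbt m; omega
    have hkey := key_lemma (fun i => fb i - fbt i) (hfbsum.sub hfbtsum) (j-1) (m-1)
      (by omega)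
      (fun i => by
        have h1 : ((bt (i+1) : ℝ)) * (1/2:ℝ)^(i+1) ≤ (1/2:ℝ)^(i+1) := by
          have : (bt (i+1) : ℝ) ≤ 1 := by exact_mod_cast hbt (i+1)
          nlinarith [pow_pos (by norm_num : (0:ℝ) < 1/2) (i+1)]
        have h2 : (0:ℝ) ≤ ((b (i+1) : ℝ)) * (1/2:ℝ)^(i+1) := by positivity
        simp only [hfb, hfbt]; linarith)
      (fun i hi => by have := hzero i hi; show fb i - fbt i = 0; linarith)
      (by
        have hj' : j - 1 + 1 = j := by omega
        simp only [hfb, hfbt, hj', hbj1, hbtj0]; norm_num)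
      (by
        have hm' : m - 1 + 1 = m := by omega
        simp only [hfb, hfbt, hm', hbtm]
        have : (0:ℝ) ≤ (b m : ℝ) * (1/2)^m := by positivity
        simpa using this)
    rw [← hsub2] at hkey
    have : (0:ℝ) < (1/2:ℝ)^(m-1+1) := by positivity
    linarith
  · -- bt j = 1, b j = 0
    have hbtj1 : bt j = 1 := by omega
    have hbj0 : b j = 0 := by omega
    have hkey := key_lemma (fun i => fbt i - fb i) (hfbtsum.sub hfbsum) (j-1) (k-1)
      (by omega)
      (fun i => by
        have h1 : ((b (i+1) : ℝ)) * (1/2:ℝ)^(i+1) ≤ (1/2:ℝ)^(i+1) := by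
          have : (b (i+1) : ℝ) ≤ 1 := by exact_mod_cast hb (i+1)
          nlinarith [pow_pos (by norm_num : (0:ℝ) < 1/2) (i+1)]
        have h2 : (0:ℝ) ≤ ((bt (i+1) : ℝ)) * (1/2:ℝ)^(i+1) := by positivity
        simp only [hfb, hfbt]; linarith)
      hzero
      (by
        have hj' : j - 1 + 1 = j := by omega
        simp only [hfb, hfbt, hj', hbj0, hbtj1]; norm_num)
      (by
        have hk' : k - 1 + 1 = k := by omega
        simp only [hfb, hfbt, hk', hk1]
        have hbk : (b k : ℝ) ≤ 1 := by exact_mod_cast hb k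
        nlinarith [pow_pos (by norm_num : (0:ℝ) < 1/2) k])
    rw [← hsub1] at hkey
    have hk'' : k - 1 + 1 = k := by omega
    rw [hk''] at hkey
    have hnk : ((1/2:ℝ))^n ≤ (1/2)^k :=
      pow_le_pow_of_le_one (by norm_num) (by norm_num) hkn
    have hzn : (2:ℝ) ^ (-(n:ℤ)) = ((1/2:ℝ))^n := by
      rw [one_div, inv_pow, ← zpow_natCast (2:ℝ) n, ← zpow_neg]
    rw [hzn] at hclose
    linarith
end

section
/- With p_0 = q_0 = 1, p_{i+1} = p_i² − c q_i², q_{i+1} = 2 p_i q_i + b q_i², for integers b ≥ 2, c < 0, 1 + b + c > 0, one has b^(2^i − 1) ≤ q_i ≤ (b + 2)^(2^i − 1) for every i ≥ 0. -/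
theorem q_bounds (b c : ℤ) (hb : 2 ≤ b) (hc : c < 0) (h : 0 < 1 + b + c)
    (p q : ℕ → ℤ) (hp0 : p 0 = 1) (hq0 : q 0 = 1)
    (hp : ∀ i, p (i + 1) = (p i) ^ 2 - c * (q i) ^ 2)
    (hq : ∀ i, q (i + 1) = 2 * p i * q i + b * (q i) ^ 2) :
    ∀ i : ℕ, b ^ (2 ^ i - 1) ≤ q i ∧ q i ≤ (b + 2) ^ (2 ^ i - 1) := by
  have hbc : 0 ≤ b + c := by linarith
  have aux : ∀ i, 0 < p i ∧ 0 < q i ∧ p i ≤ q i := by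
    intro i
    induction i with
    | zero => simp [hp0, hq0]
    | succ n ih =>
      obtain ⟨hp1, hq1, hpq⟩ := ih
      refine ⟨?_, ?_, ?_⟩
      · rw [hp n]; nlinarith
      · rw [hq n]; nlinarith
      · rw [hp n, hq n]; nlinarith
  intro i
  induction i with
  | zero => simp [hq0]
  | succ n ih =>
    obtain ⟨hlo, hhi⟩ := ih
    obtain ⟨hp1, hq1, hpq⟩ := aux n
    have hb0 : (0:ℤ) < b := by linarith
    have hexp : 2 ^ (n + 1) - 1 = 2 * (2 ^ n - 1) + 1 := by
      have : 1 ≤ 2 ^ n := Nat.one_le_two_pow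
      omega
    have hbpow : (0:ℤ) < b ^ (2 ^ n - 1) := pow_pos hb0 _
    have key : ∀ x : ℤ, x ^ (2 ^ (n + 1) - 1) = (x ^ (2 ^ n - 1)) ^ 2 * x := by
      intro x
      rw [hexp, mul_comm 2, pow_succ, pow_mul]
    constructor
    · rw [hq n, key]
      have : (b ^ (2 ^ n - 1)) ^ 2 ≤ (q n) ^ 2 := by nlinarith
      nlinarith
    · rw [hq n, key]
      have h1 : (q n) ^ 2 ≤ ((b + 2) ^ (2 ^ n - 1)) ^ 2 := by nlinarith
      have h2 : (0:ℤ) < ((b + 2) ^ (2 ^ n - 1)) ^ 2 := by positivity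
      nlinarith
end

section
/- With p_0 = q_0 = 1, p_{i+1} = p_i² − c q_i², q_{i+1} = 2 p_i q_i + b q_i², for integers b ≥ 2, c < 0, 1 + b + c > 0, the bit length ℓ_i = ⌊log₂ q_i⌋ + 1 satisfies (2^i − 1) log₂ b < ℓ_i ≤ (2^i − 1) log₂(b + 2) + 1 < 2^i log₂(b + 2) for all i ≥ 0. -/
theorem bitlength_bounds (b c : ℤ) (hb : 2 ≤ b) (hc : c < 0) (h : 0 < 1 + b + c)
    (p q : ℕ → ℤ) (hp0 : p 0 = 1) (hq0 : q 0 = 1)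
    (hp : ∀ i, p (i + 1) = (p i) ^ 2 - c * (q i) ^ 2)
    (hq : ∀ i, q (i + 1) = 2 * p i * q i + b * (q i) ^ 2) :
    ∀ i : ℕ,
      ((2 : ℝ) ^ i - 1) * Real.logb 2 (b : ℝ)
          < ((⌊Real.logb 2 ((q i : ℝ))⌋ + 1 : ℤ) : ℝ) ∧
      ((⌊Real.logb 2 ((q i : ℝ))⌋ + 1 : ℤ) : ℝ)
          ≤ ((2 : ℝ) ^ i - 1) * Real.logb 2 ((b : ℝ) + 2) + 1 ∧
      ((2 : ℝ) ^ i - 1) * Real.logb 2 ((b : ℝ) + 2) + 1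
          < (2 : ℝ) ^ i * Real.logb 2 ((b : ℝ) + 2) := by
  have key : ∀ i : ℕ, 0 < p i ∧ 0 < q i ∧ p i ≤ q i ∧
      b ^ (2 ^ i - 1) ≤ q i ∧ q i ≤ (b + 2) ^ (2 ^ i - 1) := by
    intro i
    induction i with
    | zero => simp [hp0, hq0]
    | succ i ih =>
      obtain ⟨hpi, hqi, hpq, hlo, hhi⟩ := ih
      have hcb : -b ≤ c := by omega
      have hexp : 2 ^ (i + 1) - 1 = 2 * (2 ^ i - 1) + 1 := by
        have h1 : 1 ≤ 2 ^ i := Nat.one_le_two_pow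
        have : 2 ^ (i + 1) = 2 * 2 ^ i := by ring
        omega
      set m := 2 ^ i - 1 with hm
      have hbpos : (0:ℤ) < b := by linarith
      have hbm : (0:ℤ) < b ^ m := pow_pos hbpos m
      have hsq1 : (b ^ m) ^ 2 ≤ (q i) ^ 2 := by
        apply pow_le_pow_left₀ hbm.le hlo
      have hsq2 : (q i) ^ 2 ≤ ((b + 2) ^ m) ^ 2 := by
        apply pow_le_pow_left₀ hqi.le hhi
      have hpow1 : b ^ (2 ^ (i + 1) - 1) = b * (b ^ m) ^ 2 := by
        rw [hexp, pow_succ, two_mul, pow_add]; ring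
      have hpow2 : (b + 2) ^ (2 ^ (i + 1) - 1) = (b + 2) * ((b + 2) ^ m) ^ 2 := by
        rw [hexp, pow_succ, two_mul, pow_add]; ring
      refine ⟨?_, ?_, ?_, ?_, ?_⟩
      · rw [hp]
        nlinarith [mul_pos (neg_pos.mpr hc) (pow_pos hqi 2), pow_pos hpi 2]
      · rw [hq]
        nlinarith [mul_pos hpi hqi, pow_pos hqi 2]
      · rw [hp, hq]
        nlinarith [mul_le_mul_of_nonneg_left hpq hpi.le, pow_pos hqi 2,
          mul_pos hpi hqi]
      · rw [hq, hpow1]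
        nlinarith [mul_le_mul_of_nonneg_left hsq1 hbpos.le, mul_pos hpi hqi]
      · rw [hq, hpow2]
        nlinarith [mul_le_mul_of_nonneg_left hsq2 (by linarith : (0:ℤ) ≤ b + 2),
          mul_le_mul_of_nonneg_left hpq hqi.le, pow_pos hqi 2]
  intro i
  obtain ⟨hpi, hqi, hpq, hlo, hhi⟩ := key i
  set m := 2 ^ i - 1 with hm
  set x := Real.logb 2 ((q i : ℝ)) with hx
  have hbR : (1:ℝ) < (b : ℝ) := by exact_mod_cast (by linarith : (1:ℤ) < b)
  have hbmR : (0:ℝ) < (b : ℝ) ^ m := pow_pos (by linarith) m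
  have hloR : ((b : ℝ)) ^ m ≤ (q i : ℝ) := by exact_mod_cast hlo
  have hhiR : (q i : ℝ) ≤ ((b : ℝ) + 2) ^ m := by exact_mod_cast hhi
  have h12 : (1:ℝ) < 2 := one_lt_two
  have hx1 : (m : ℝ) * Real.logb 2 (b : ℝ) ≤ x := by
    have := Real.logb_le_logb_of_le h12 hbmR hloR
    rwa [Real.logb_pow] at this
  have hx2 : x ≤ (m : ℝ) * Real.logb 2 ((b : ℝ) + 2) := by
    have hq0 : (0:ℝ) < (q i : ℝ) := by exact_mod_cast hqi
    have := Real.logb_le_logb_of_le h12 hq0 hhiR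
    rwa [Real.logb_pow] at this
  have hmcast : ((m : ℕ) : ℝ) = (2 : ℝ) ^ i - 1 := by
    rw [hm]
    have h1 : 1 ≤ 2 ^ i := Nat.one_le_two_pow
    push_cast [Nat.cast_sub h1]
    ring
  rw [hmcast] at hx1 hx2
  have hfl : x < (⌊x⌋ : ℝ) + 1 := Int.lt_floor_add_one x
  have hfl2 : ((⌊x⌋ : ℤ) : ℝ) ≤ x := Int.floor_le x
  have hL : (1:ℝ) < Real.logb 2 ((b : ℝ) + 2) := by
    have h4 : (2:ℝ) < (b : ℝ) + 2 := by linarith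
    have := Real.logb_lt_logb h12 (by norm_num : (0:ℝ) < 2) h4
    simpa using this
  refine ⟨?_, ?_, ?_⟩
  · push_cast
    linarith
  · push_cast
    linarith
  · nlinarith [hL]
end

section
/- Define sequences (b_n, c_n) of integer pairs by the Bernoulli-map dynamics: if sgn(1 + 2b_n + 4c_n) ≠ sgn(c_n) then (b_{n+1}, c_{n+1}) = (2b_n, 4c_n), otherwise (b_{n+1}, c_{n+1}) = (2b_n + 2, 2b_n + 4c_n + 1). If b_0 > 0, then 2^n b_0 ≤ b_n ≤ 2^n (b_0 + 2) − 2 for all n ≥ 0. -/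
theorem bernoulli_coeff_growth (b c : ℕ → ℤ)
    (hrec : ∀ n,
      (Int.sign (1 + 2 * b n + 4 * c n) ≠ Int.sign (c n) →
        b (n + 1) = 2 * b n ∧ c (n + 1) = 4 * c n) ∧
      (Int.sign (1 + 2 * b n + 4 * c n) = Int.sign (c n) →
        b (n + 1) = 2 * b n + 2 ∧ c (n + 1) = 2 * b n + 4 * c n + 1))
    (hb0 : 0 < b 0) :
    ∀ n : ℕ, 2 ^ n * b 0 ≤ b n ∧ b n ≤ 2 ^ n * (b 0 + 2) - 2 := by
  intro n
  induction n with
  | zero => simp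
  | succ n ih =>
    obtain ⟨h1, h2⟩ := ih
    have key : b (n + 1) = 2 * b n ∨ b (n + 1) = 2 * b n + 2 := by
      rcases eq_or_ne (Int.sign (1 + 2 * b n + 4 * c n)) (Int.sign (c n)) with h | h
      · exact Or.inr ((hrec n).2 h).1
      · exact Or.inl ((hrec n).1 h).1
    have hp : (0:ℤ) < 2 ^ n := by positivity
    rw [pow_succ]
    rcases key with h | h <;> rw [h] <;> constructor <;> nlinarith
end

section
/- Let (b, c) ∈ ℤ² with c < 0 and 1 + b + c > 0, and let α ∈ (0,1) be the root of x² + bx + c. Then 2α mod 1 is again a root in (0,1) of a monic quadratic with integer coefficients; specifically, if sgn(1 + 2b + 4c) ≠ sgn(c) then 2α ∈ (0,1) and 2α is the root in (0,1) of x² + 2bx + 4c, while otherwise 2α − 1 ∈ (0,1) and is the root in (0,1) of x² + (2b + 2)x + (2b + 4c + 1). -/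
theorem bernoulli_map_on_roots (b c : ℤ) (hc : c < 0) (h : 0 < 1 + b + c)
    (α : ℝ) (hα : α ∈ Set.Ioo (0 : ℝ) 1)
    (hroot : α ^ 2 + (b : ℝ) * α + (c : ℝ) = 0) :
    (Int.sign (1 + 2 * b + 4 * c) ≠ Int.sign c →
      2 * α ∈ Set.Ioo (0 : ℝ) 1 ∧
      (2 * α) ^ 2 + ((2 * b : ℤ) : ℝ) * (2 * α) + ((4 * c : ℤ) : ℝ) = 0) ∧
    (Int.sign (1 + 2 * b + 4 * c) = Int.sign c →
      2 * α - 1 ∈ Set.Ioo (0 : ℝ) 1 ∧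
      (2 * α - 1) ^ 2 + ((2 * b + 2 : ℤ) : ℝ) * (2 * α - 1)
        + ((2 * b + 4 * c + 1 : ℤ) : ℝ) = 0) := by
  obtain ⟨hα0, hα1⟩ := hα
  have hcR : (c : ℝ) < 0 := by exact_mod_cast hc
  have hbα : (0 : ℝ) < (b : ℝ) + α := by nlinarith
  have hfact : (1/4 : ℝ) + (b : ℝ)/2 + (c : ℝ) = (1/2 - α) * (1/2 + (b : ℝ) + α) := by
    linear_combination hroot
  have hsc : Int.sign c = -1 := Int.sign_eq_neg_one_of_neg hc
  constructor
  · intro hs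
    have hpos : 0 < 1 + 2 * b + 4 * c := by
      rcases lt_trichotomy (1 + 2 * b + 4 * c) 0 with h' | h' | h'
      · exact absurd (by rw [Int.sign_eq_neg_one_of_neg h', hsc]) hs
      · omega
      · exact h'
    have hposR : (0 : ℝ) < 1 + 2 * (b : ℝ) + 4 * (c : ℝ) := by exact_mod_cast hpos
    have hhalf : α < 1/2 := by nlinarith
    refine ⟨⟨by linarith, by linarith⟩, ?_⟩
    push_cast
    linear_combination 4 * hroot
  · intro hs
    have hneg : 1 + 2 * b + 4 * c < 0 := by
      rcases lt_trichotomy (1 + 2 * b + 4 * c) 0 with h' | h' | h'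
      · exact h'
      · omega
      · rw [Int.sign_eq_one_of_pos h', hsc] at hs; omega
    have hnegR : (1 + 2 * (b : ℝ) + 4 * (c : ℝ)) < 0 := by exact_mod_cast hneg
    have hhalf : 1/2 < α := by nlinarith
    refine ⟨⟨by linarith, by linarith⟩, ?_⟩
    push_cast
    linear_combination 4 * hroot
end

section
/- Let (b, c) ∈ ℤ² with c < 0 and 1 + b + c > 0, α ∈ (0,1) the root of x² + bx + c, and α = Σ_{k≥1} d_k 2^(−k) its binary expansion. Then the first binary digit d_1 equals 0 if sgn(1 + 2b + 4c) ≠ sgn(c), and equals 1 otherwise. -/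
theorem first_binary_digit (b c : ℤ) (hc : c < 0) (h : 0 < 1 + b + c)
    (α : ℝ) (hα : α ∈ Set.Ioo (0 : ℝ) 1)
    (hroot : α ^ 2 + (b : ℝ) * α + (c : ℝ) = 0) (hirr : Irrational α)
    (d : ℕ → ℕ) (hd : ∀ k, d k ≤ 1)
    (hsum : α = ∑' k : ℕ, (d (k + 1) : ℝ) * (2 : ℝ) ^ (-((k : ℤ) + 1))) :
    (Int.sign (1 + 2 * b + 4 * c) ≠ Int.sign c → d 1 = 0) ∧
    (Int.sign (1 + 2 * b + 4 * c) = Int.sign c → d 1 = 1) := by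
  obtain ⟨hα0, hα1⟩ := hα
  have hcR : (c : ℝ) < 0 := by exact_mod_cast hc
  -- α ≠ 1/2
  have hne : α ≠ 1 / 2 := by
    intro heq
    exact hirr ⟨(1 / 2 : ℚ), by rw [heq]; norm_num⟩
  -- b + α > 0
  have hbα : 0 < (b : ℝ) + α := by nlinarith
  -- factorization at 1/2
  have hfac : (1 / 2 - α) * (α + (b : ℝ) + 1 / 2) = ((1 + 2 * b + 4 * c : ℤ) : ℝ) / 4 := by
    push_cast
    linear_combination (-1 : ℝ) * hroot
  have hpos : 0 < α + (b : ℝ) + 1 / 2 := by linarith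
  -- rewrite the power
  have hpow : ∀ k : ℕ, (2 : ℝ) ^ (-((k : ℤ) + 1)) = (1 / 2) ^ (k + 1) := by
    intro k
    rw [show -((k : ℤ) + 1) = -((k + 1 : ℕ) : ℤ) by push_cast; ring, zpow_neg, zpow_natCast,
      one_div, inv_pow]
  have hsum' : α = ∑' k : ℕ, (d (k + 1) : ℝ) * (1 / 2) ^ (k + 1) := by
    rw [hsum]; exact tsum_congr fun k => by rw [hpow]
  have hgeo : Summable (fun k : ℕ => (1 / 2 : ℝ) ^ (k + 1)) := by
    simpa [pow_succ, mul_comm] using (summable_geometric_two).mul_left (1 / 2 : ℝ)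
  have hsumm : Summable (fun k : ℕ => (d (k + 1) : ℝ) * (1 / 2) ^ (k + 1)) := by
    refine Summable.of_nonneg_of_le (fun k => by positivity) (fun k => ?_) hgeo
    have : (d (k + 1) : ℝ) ≤ 1 := by exact_mod_cast hd (k + 1)
    nlinarith [pow_nonneg (by norm_num : (0:ℝ) ≤ 1/2) (k + 1)]
  have hsplit : α = (d 1 : ℝ) * (1 / 2) + ∑' k : ℕ, (d (k + 2) : ℝ) * (1 / 2) ^ (k + 2) := by
    rw [hsum', Summable.tsum_eq_zero_add hsumm]
    norm_num
  set T := ∑' k : ℕ, (d (k + 2) : ℝ) * (1 / 2) ^ (k + 2) with hTdef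
  have hT0 : 0 ≤ T := tsum_nonneg fun k => by positivity
  have hgeo2 : Summable (fun k : ℕ => (1 / 2 : ℝ) ^ (k + 2)) := by
    have := (summable_geometric_two).mul_left (1 / 4 : ℝ)
    apply this.congr
    intro k
    simp [pow_succ]
    ring
  have hsumm2 : Summable (fun k : ℕ => (d (k + 2) : ℝ) * (1 / 2) ^ (k + 2)) := by
    simpa using (summable_nat_add_iff 1).mpr hsumm
  have hgval : ∑' k : ℕ, (1 / 2 : ℝ) ^ (k + 2) = 1 / 2 := by
    have : ∑' k : ℕ, (1 / 2 : ℝ) ^ (k + 2) = (1 / 4) * ∑' k : ℕ, (1 / 2 : ℝ) ^ k := by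
      rw [← tsum_mul_left]
      exact tsum_congr fun k => by ring
    rw [this, tsum_geometric_two]; norm_num
  have hT1 : T ≤ 1 / 2 := by
    rw [← hgval]
    apply Summable.tsum_le_tsum _ hsumm2 hgeo2
    intro k
    have : (d (k + 2) : ℝ) ≤ 1 := by exact_mod_cast hd (k + 2)
    nlinarith [pow_nonneg (by norm_num : (0:ℝ) ≤ 1/2) (k + 2)]
  -- digit dichotomy
  have h01 : (d 1 = 0 ∧ α < 1 / 2) ∨ (d 1 = 1 ∧ 1 / 2 < α) := by
    rcases Nat.le_one_iff_eq_zero_or_eq_one.mp (hd 1) with h0 | h1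
    · left
      refine ⟨h0, ?_⟩
      rw [hsplit, h0] at hne ⊢
      simp only [Nat.cast_zero, zero_mul, zero_add] at hne ⊢
      exact lt_of_le_of_ne hT1 hne
    · right
      refine ⟨h1, ?_⟩
      rw [hsplit, h1] at hne ⊢
      simp only [Nat.cast_one, one_mul] at hne ⊢
      have : (1 : ℝ) / 2 ≠ 1 / 2 + T := fun hh => hne hh.symm
      have h2 : 0 ≠ T := fun hh => this (by rw [← hh]; ring)
      linarith [lt_of_le_of_ne hT0 h2]
  have hsc : Int.sign c = -1 := Int.sign_eq_neg_one_iff_neg.mpr hc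
  have hiff : Int.sign (1 + 2 * b + 4 * c) = Int.sign c ↔ 1 / 2 < α := by
    rw [hsc, Int.sign_eq_neg_one_iff_neg]
    constructor
    · intro hlt
      have hR : ((1 + 2 * b + 4 * c : ℤ) : ℝ) < 0 := by exact_mod_cast hlt
      by_contra hge
      push_neg at hge
      nlinarith [hfac, hpos]
    · intro hlt
      have hR : ((1 + 2 * b + 4 * c : ℤ) : ℝ) < 0 := by nlinarith [hfac, hpos]
      exact_mod_cast hR
  constructor
  · intro hs
    rcases h01 with ⟨h0, _⟩ | ⟨_, hgt⟩
    · exact h0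
    · exact absurd (hiff.mpr hgt) hs
  · intro hs
    rcases h01 with ⟨_, hlt⟩ | ⟨h1, _⟩
    · exact absurd hlt (by linarith [hiff.mp hs])
    · exact h1
end
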